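/- For every prime power q ≥ 5, the minimum distance of the toric code C_{P_6^(13)} over 𝔽_q equals (q-1)² − 2(q-1), where P_6^(13) = conv{(0,0),(2,0),(0,2)}. -/

import Mathlib

/-- Embed a lattice point of `ℤ²` into the real plane. -/
def toRealPt (p : ℤ × ℤ) : ℝ × ℝ := ((p.1 : ℝ), (p.2 : ℝ))

/-- The lattice points of the (possibly degenerate) convex lattice polygon spanned by a
finite set `V` of points of `ℤ²`, i.e. the points of `ℤ²` lying in the convex hull of `V`. -/
def latticePts (V : Finset (ℤ × ℤ)) : Set (ℤ × ℤ) :=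
  {p | toRealPt p ∈ convexHull ℝ (toRealPt '' (V : Set (ℤ × ℤ)))}

/-- The integer affine map `T(x) = Mx + v` on `ℤ²`. -/
def affMap (M : Matrix (Fin 2) (Fin 2) ℤ) (v : ℤ × ℤ) (p : ℤ × ℤ) : ℤ × ℤ :=
  (M 0 0 * p.1 + M 0 1 * p.2 + v.1, M 1 0 * p.1 + M 1 1 * p.2 + v.2)

/-- Two subsets of `ℤ²` are lattice equivalent if some affine map `T(x) = Mx + v`,
with `M ∈ GL(2,ℤ)` and `v ∈ ℤ²`, maps the first bijectively onto the second. -/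
def LatticeEquiv (S S' : Set (ℤ × ℤ)) : Prop :=
  ∃ (M : Matrix (Fin 2) (Fin 2) ℤ) (v : ℤ × ℤ),
    IsUnit M.det ∧ Set.BijOn (affMap M v) S S'

/-- Evaluation of the Laurent monomial `x^{m₁} y^{m₂}` at a point of the torus `(F*)²`. -/
def evalMonomial {F : Type*} [Field F] (m : ℤ × ℤ) (t : Fˣ × Fˣ) : F :=
  ((t.1 ^ m.1 : Fˣ) : F) * ((t.2 ^ m.2 : Fˣ) : F)

/-- The toric code over `F` associated to a set `S ⊆ ℤ²` of exponent vectors: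
the span of the evaluation vectors of the monomials `x^{m₁} y^{m₂}`, `m ∈ S`. -/
def toricCode (F : Type*) [Field F] (S : Set (ℤ × ℤ)) :
    Submodule F ((Fˣ × Fˣ) → F) :=
  Submodule.span F ((fun m => evalMonomial m) '' S)

/-- The Hamming weight of a word: the number of nonzero coordinates. -/
noncomputable def hammingWt {X F : Type*} [Zero F] (c : X → F) : ℕ :=
  Set.ncard {x | c x ≠ 0}

/-- The minimum distance of a linear code: the least Hamming weight of a nonzero codeword. -/
noncomputable def minDist {F X : Type*} [Field F] (C : Submodule F (X → F)) : ℕ :=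
  sInf {w | ∃ c ∈ C, c ≠ 0 ∧ hammingWt c = w}

/-- Monomial equivalence of linear codes inside `F^X`. -/
def MonomiallyEquiv {F X : Type*} [Field F] (C₁ C₂ : Submodule F (X → F)) : Prop :=
  ∃ (π : Equiv.Perm X) (d : X → Fˣ),
    (C₂ : Set (X → F)) = (fun c x => (d x : F) * c (π x)) '' (C₁ : Set (X → F))

/-- The vertex sets of the fourteen polygons `P₆⁽ⁱ⁾`, `i = 1, …, 14`. -/
def P6 : ℕ → Finset (ℤ × ℤ)
  | 1 => {(0,0),(5,0)}
  | 2 => {(0,0),(4,0),(0,1)}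
  | 3 => {(0,0),(3,0),(1,1),(0,1)}
  | 4 => {(0,-1),(3,0),(0,1)}
  | 5 => {(-1,-1),(3,0),(0,1)}
  | 6 => {(0,0),(1,0),(3,3),(0,1)}
  | 7 => {(0,0),(0,1),(3,0),(3,-1)}
  | 8 => {(-1,0),(0,1),(2,0),(0,-1)}
  | 9 => {(0,-1),(2,0),(1,1),(0,1)}
  | 10 => {(0,-1),(2,0),(-1,2)}
  | 11 => {(-1,-1),(1,0),(1,1),(0,2)}
  | 12 => {(-1,0),(0,-1),(1,0),(1,1),(0,1)}
  | 13 => {(0,0),(2,0),(0,2)}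
  | 14 => {(0,0),(2,0),(2,1),(0,1)}
  | _ => ∅


section Helpers
open Finset
variable {F : Type} [Field F] [Fintype F] [DecidableEq F]

lemma units_root_card_le (p : Polynomial F) (hp : p ≠ 0) :
    #(univ.filter (fun t : Fˣ => p.eval (t : F) = 0)) ≤ p.natDegree := by
  calc #(univ.filter (fun t : Fˣ => p.eval (t : F) = 0)) ≤ #p.roots.toFinset := by
        refine Finset.card_le_card_of_injOn (fun t : Fˣ => (t : F)) ?_ ?_
        · intro a ha
          rw [Finset.mem_coe, Finset.mem_filter] at ha
          simp [Multiset.mem_toFinset, Polynomial.mem_roots hp, Polynomial.IsRoot, ha.2]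
        · intro a _ b _ h; exact Units.ext h
    _ ≤ Multiset.card p.roots := Multiset.toFinset_card_le _
    _ ≤ p.natDegree := Polynomial.card_roots' p

lemma quad_card_le (A B C : F) (h : ¬(A = 0 ∧ B = 0 ∧ C = 0)) :
    #(univ.filter (fun t : Fˣ => A * (t:F)^2 + B * t + C = 0)) ≤ 2 := by
  set p : Polynomial F := Polynomial.C A * Polynomial.X ^ 2 + Polynomial.C B * Polynomial.X
      + Polynomial.C C with hp
  have hpne : p ≠ 0 := by
    intro h0
    refine h ⟨?_, ?_, ?_⟩
    · have := congrArg (Polynomial.coeff · 2) h0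
      simpa [hp, Polynomial.coeff_add, Polynomial.coeff_C] using this
    · have := congrArg (Polynomial.coeff · 1) h0
      simpa [hp, Polynomial.coeff_add, Polynomial.coeff_C] using this
    · have := congrArg (Polynomial.coeff · 0) h0
      simpa [hp, Polynomial.coeff_add, Polynomial.coeff_C] using this
  have hdeg : p.natDegree ≤ 2 := by rw [hp]; compute_degree
  have key := units_root_card_le p hpne
  have heval : ∀ t : Fˣ, p.eval (t : F) = A * (t:F)^2 + B * t + C := by
    intro t; simp [hp]
  simp only [heval] at key
  exact key.trans hdeg

lemma lin_card_le (B C : F) (hB : B ≠ 0) :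
    #(univ.filter (fun t : Fˣ => B * (t:F) + C = 0)) ≤ 1 := by
  set p : Polynomial F := Polynomial.C B * Polynomial.X + Polynomial.C C with hp
  have hpne : p ≠ 0 := by
    intro h0
    apply hB
    have := congrArg (Polynomial.coeff · 1) h0
    simpa [hp, Polynomial.coeff_add, Polynomial.coeff_C] using this
  have hdeg : p.natDegree ≤ 1 := by rw [hp]; compute_degree
  have key := units_root_card_le p hpne
  have heval : ∀ t : Fˣ, p.eval (t : F) = B * (t:F) + C := by intro t; simp [hp]
  simp only [heval] at key
  exact key.trans hdeg

lemma fiber_card (g : Fˣ → Fˣ → F) :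
    #(univ.filter (fun p : Fˣ × Fˣ => g p.1 p.2 = 0)) =
      ∑ s : Fˣ, #(univ.filter (fun t : Fˣ => g s t = 0)) := by
  rw [Finset.card_eq_sum_card_fiberwise (f := Prod.fst) (t := univ)
    (fun x _ => Finset.mem_univ _)]
  refine Finset.sum_congr rfl fun s _ => ?_
  refine Finset.card_bij' (fun p _ => p.2) (fun t _ => (s, t)) ?_ ?_ ?_ ?_
  · intro p hp
    simp only [Finset.mem_filter, Finset.mem_univ, true_and] at hp ⊢
    obtain ⟨h1, h2⟩ := hp
    subst h2; exact h1
  · intro t ht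
    simp only [Finset.mem_filter, Finset.mem_univ, true_and] at ht ⊢
    simp [ht]
  · intro p hp
    simp only [Finset.mem_filter, Finset.mem_univ, true_and] at hp
    exact Prod.ext hp.2.symm rfl
  · intro t ht; rfl

lemma zeros_card_le (a b c d e f : F)
    (hne : ∃ p : Fˣ × Fˣ,
      a + b * (p.1:F) + c * (p.1:F)^2 + (d + e * (p.1:F)) * (p.2:F) + f * (p.2:F)^2 ≠ 0) :
    #(univ.filter (fun p : Fˣ × Fˣ =>
        a + b * (p.1:F) + c * (p.1:F)^2 + (d + e * (p.1:F)) * (p.2:F) + f * (p.2:F)^2 = 0))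
      ≤ 2 * (Fintype.card F - 1) := by
  have hcard : (Finset.univ : Finset Fˣ).card = Fintype.card F - 1 := by
    rw [Finset.card_univ]; exact Fintype.card_units F
  set Q := Fintype.card F - 1 with hQ
  rw [fiber_card (fun s t => a + b * (s:F) + c * (s:F)^2 + (d + e * (s:F)) * (t:F) + f * (t:F)^2)]
  by_cases hf : f ≠ 0
  · have hbd : ∀ s : Fˣ,
        #(univ.filter (fun t : Fˣ =>
          a + b * (s:F) + c * (s:F)^2 + (d + e * (s:F)) * (t:F) + f * (t:F)^2 = 0)) ≤ 2 := by
      intro s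
      have hset : (univ.filter (fun t : Fˣ =>
            a + b * (s:F) + c * (s:F)^2 + (d + e * (s:F)) * (t:F) + f * (t:F)^2 = 0))
          = (univ.filter (fun t : Fˣ =>
            f * (t:F)^2 + (d + e * (s:F)) * (t:F) + (a + b * (s:F) + c * (s:F)^2) = 0)) := by
        apply Finset.filter_congr; intro t _
        constructor <;> intro h <;> linear_combination h
      rw [hset]
      exact quad_card_le f (d + e * s) (a + b * (s:F) + c * (s:F)^2) (fun h => hf h.1)
    calc (∑ s : Fˣ, #(univ.filter (fun t : Fˣ =>
            a + b * (s:F) + c * (s:F)^2 + (d + e * (s:F)) * (t:F) + f * (t:F)^2 = 0)))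
        ≤ (Finset.univ : Finset Fˣ).card • 2 :=
          Finset.sum_le_card_nsmul _ _ 2 (fun s _ => hbd s)
      _ = 2 * Q := by rw [hcard, smul_eq_mul]; ring
  · push_neg at hf
    subst hf
    by_cases he : e ≠ 0
    · have key := Finset.sum_filter_add_sum_filter_not (Finset.univ : Finset Fˣ)
        (fun s : Fˣ => e * (s:F) + d = 0)
        (fun s : Fˣ => #(univ.filter (fun t : Fˣ =>
          a + b * (s:F) + c * (s:F)^2 + (d + e * (s:F)) * (t:F) + 0 * (t:F)^2 = 0)))
      have h1 : (∑ s ∈ univ.filter (fun s : Fˣ => e * (s:F) + d = 0),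
          #(univ.filter (fun t : Fˣ =>
            a + b * (s:F) + c * (s:F)^2 + (d + e * (s:F)) * (t:F) + 0 * (t:F)^2 = 0))) ≤ Q := by
        calc _ ≤ (univ.filter (fun s : Fˣ => e * (s:F) + d = 0)).card • Q := by
              apply Finset.sum_le_card_nsmul
              intro s _
              calc #(univ.filter _) ≤ (Finset.univ : Finset Fˣ).card :=
                    Finset.card_filter_le _ _
                _ = Q := hcard
          _ ≤ 1 * Q := by
              have := lin_card_le e d he
              exact Nat.mul_le_mul_right Q this
          _ = Q := one_mul Q
      have h2 : (∑ s ∈ univ.filter (fun s : Fˣ => ¬(e * (s:F) + d = 0)),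
          #(univ.filter (fun t : Fˣ =>
            a + b * (s:F) + c * (s:F)^2 + (d + e * (s:F)) * (t:F) + 0 * (t:F)^2 = 0))) ≤ Q := by
        calc _ ≤ (univ.filter (fun s : Fˣ => ¬(e * (s:F) + d = 0))).card • 1 := by
              apply Finset.sum_le_card_nsmul
              intro s hs
              simp only [Finset.mem_filter] at hs
              have hlead : d + e * (s:F) ≠ 0 := by
                intro h0; exact hs.2 (by linear_combination h0)
              have hset : (univ.filter (fun t : Fˣ =>
                    a + b * (s:F) + c * (s:F)^2 + (d + e * (s:F)) * (t:F) + 0 * (t:F)^2 = 0))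
                  = (univ.filter (fun t : Fˣ =>
                    (d + e * (s:F)) * (t:F) + (a + b * (s:F) + c * (s:F)^2) = 0)) := by
                apply Finset.filter_congr; intro t _
                constructor <;> intro h <;> linear_combination h
              rw [hset]
              exact lin_card_le _ _ hlead
          _ ≤ Q := by
              have hcle : (univ.filter (fun s : Fˣ => ¬(e * (s:F) + d = 0))).card ≤ Q := by
                calc _ ≤ (Finset.univ : Finset Fˣ).card := Finset.card_filter_le _ _
                  _ = Q := hcard
              simpa [smul_eq_mul] using hcle
      omega
    · push_neg at he
      subst he
      by_cases hd : d ≠ 0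
      · have hbd : ∀ s : Fˣ,
            #(univ.filter (fun t : Fˣ =>
              a + b * (s:F) + c * (s:F)^2 + (d + 0 * (s:F)) * (t:F) + 0 * (t:F)^2 = 0)) ≤ 1 := by
          intro s
          have hset : (univ.filter (fun t : Fˣ =>
                a + b * (s:F) + c * (s:F)^2 + (d + 0 * (s:F)) * (t:F) + 0 * (t:F)^2 = 0))
              = (univ.filter (fun t : Fˣ =>
                d * (t:F) + (a + b * (s:F) + c * (s:F)^2) = 0)) := by
            apply Finset.filter_congr; intro t _
            constructor <;> intro h <;> linear_combination h
          rw [hset]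
          exact lin_card_le _ _ hd
        calc _ ≤ (Finset.univ : Finset Fˣ).card • 1 :=
              Finset.sum_le_card_nsmul _ _ 1 (fun s _ => hbd s)
          _ ≤ 2 * Q := by rw [hcard, smul_eq_mul, mul_one]; omega
      · push_neg at hd
        subst hd
        have habc : ¬(c = 0 ∧ b = 0 ∧ a = 0) := by
          rintro ⟨hc, hb, ha⟩
          obtain ⟨p, hp⟩ := hne
          apply hp
          rw [ha, hb, hc]; ring
        have hterm : ∀ s : Fˣ,
            #(univ.filter (fun t : Fˣ =>
              a + b * (s:F) + c * (s:F)^2 + (0 + 0 * (s:F)) * (t:F) + 0 * (t:F)^2 = 0))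
            = if a + b * (s:F) + c * (s:F)^2 = 0 then Q else 0 := by
          intro s
          have hset : (univ.filter (fun t : Fˣ =>
                a + b * (s:F) + c * (s:F)^2 + (0 + 0 * (s:F)) * (t:F) + 0 * (t:F)^2 = 0))
              = (univ.filter (fun _ : Fˣ => a + b * (s:F) + c * (s:F)^2 = 0)) := by
            apply Finset.filter_congr; intro t _
            constructor <;> intro h <;> linear_combination h
          rw [hset, Finset.filter_const]
          split <;> simp [hcard]
        rw [Finset.sum_congr rfl (fun s _ => hterm s)]
        have hsum : (∑ s : Fˣ, if a + b * (s:F) + c * (s:F)^2 = 0 then Q else 0)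
            = (univ.filter (fun s : Fˣ => a + b * (s:F) + c * (s:F)^2 = 0)).card * Q := by
          rw [← Finset.sum_filter]
          rw [Finset.sum_const, smul_eq_mul]
        rw [hsum]
        have hroots : (univ.filter (fun s : Fˣ => a + b * (s:F) + c * (s:F)^2 = 0)).card ≤ 2 := by
          have hset : (univ.filter (fun s : Fˣ => a + b * (s:F) + c * (s:F)^2 = 0))
              = (univ.filter (fun s : Fˣ => c * (s:F)^2 + b * (s:F) + a = 0)) := by
            apply Finset.filter_congr; intro s _
            constructor <;> intro h <;> linear_combination h
          rw [hset]
          exact quad_card_le c b a habc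
        exact Nat.mul_le_mul_right Q hroots

end Helpers

lemma latticePts_P6_13 :
    latticePts (P6 13) =
      ({(0,0),(1,0),(2,0),(0,1),(1,1),(0,2)} : Set (ℤ × ℤ)) := by
  have himg : toRealPt '' ((P6 13 : Finset (ℤ × ℤ)) : Set (ℤ × ℤ))
      = ({((0:ℝ),(0:ℝ)), ((2:ℝ),(0:ℝ)), ((0:ℝ),(2:ℝ))} : Set (ℝ × ℝ)) := by
    show toRealPt '' (({(0,0),(2,0),(0,2)} : Finset (ℤ × ℤ)) : Set (ℤ × ℤ)) = _
    simp only [Finset.coe_insert, Finset.coe_singleton, Set.image_insert_eq,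
      Set.image_singleton]
    norm_num [toRealPt]
  set V : Set (ℝ × ℝ) := ({((0:ℝ),(0:ℝ)), ((2:ℝ),(0:ℝ)), ((0:ℝ),(2:ℝ))} : Set (ℝ × ℝ)) with hV
  have h00 : ((0:ℝ),(0:ℝ)) ∈ convexHull ℝ V := subset_convexHull ℝ V (by simp [hV])
  have h20 : ((2:ℝ),(0:ℝ)) ∈ convexHull ℝ V := subset_convexHull ℝ V (by simp [hV])
  have h02 : ((0:ℝ),(2:ℝ)) ∈ convexHull ℝ V := subset_convexHull ℝ V (by simp [hV])
  have hcx := convex_convexHull ℝ V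
  have hmid : ∀ x y : ℝ × ℝ, x ∈ convexHull ℝ V → y ∈ convexHull ℝ V →
      ((x.1 + y.1)/2, (x.2 + y.2)/2) ∈ convexHull ℝ V := by
    intro x y hx hy
    have := hcx hx hy (by norm_num : (0:ℝ) ≤ 1/2) (by norm_num : (0:ℝ) ≤ 1/2)
      (by norm_num : (1/2 : ℝ) + 1/2 = 1)
    convert this using 1
    apply Prod.ext <;> simp [Prod.smul_def] <;> ring
  have hsub : convexHull ℝ V ⊆ {p : ℝ × ℝ | 0 ≤ p.1 ∧ 0 ≤ p.2 ∧ p.1 + p.2 ≤ 2} := by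
    apply convexHull_min
    · rintro p hp
      simp only [hV, Set.mem_insert_iff, Set.mem_singleton_iff] at hp
      rcases hp with rfl | rfl | rfl <;> norm_num
    · rintro x ⟨hx1, hx2, hx3⟩ y ⟨hy1, hy2, hy3⟩ u v hu hv huv
      refine ⟨?_, ?_, ?_⟩ <;> simp only [Prod.fst_add, Prod.snd_add, Prod.smul_fst,
        Prod.smul_snd, smul_eq_mul] <;> nlinarith
  ext p
  simp only [latticePts, Set.mem_setOf_eq, himg, ← hV]
  constructor
  · intro hp
    have := hsub hp
    simp only [Set.mem_setOf_eq, toRealPt] at this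
    obtain ⟨h1, h2, h3⟩ := this
    have i1 : 0 ≤ p.1 := by exact_mod_cast h1
    have i2 : 0 ≤ p.2 := by exact_mod_cast h2
    have i3 : p.1 + p.2 ≤ 2 := by exact_mod_cast h3
    simp only [Set.mem_insert_iff, Set.mem_singleton_iff, Prod.ext_iff]
    omega
  · intro hp
    simp only [Set.mem_insert_iff, Set.mem_singleton_iff] at hp
    rcases hp with rfl | rfl | rfl | rfl | rfl | rfl
    · simpa [toRealPt] using h00
    · have := hmid _ _ h00 h20
      norm_num at this
      convert this using 2 <;> norm_num [toRealPt]
    · simpa [toRealPt] using h20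
    · have := hmid _ _ h00 h02
      norm_num at this
      convert this using 2 <;> norm_num [toRealPt]
    · have := hmid _ _ h20 h02
      norm_num at this
      convert this using 2 <;> norm_num [toRealPt]
    · simpa [toRealPt] using h02

/-- for every prime power `q ≥ 5`, the minimum distance of `C_{P₆⁽¹³⁾}`
over `𝔽_q` equals `(q-1)² − 2(q-1)`. -/
theorem minDist_P6_13 (q : ℕ) (hq : IsPrimePow q) (hq5 : 5 ≤ q)
    (F : Type) [Field F] [Fintype F] (hF : Fintype.card F = q) :
    (minDist (toricCode F (latticePts (P6 13))) : ℤ)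
      = ((q:ℤ) - 1)^2 - 2 * ((q:ℤ) - 1) := by
  classical
  have hcardU : Fintype.card Fˣ = q - 1 := by rw [Fintype.card_units F, hF]
  set N : ℕ := (q - 1) * (q - 1) with hN
  have hz2 : ∀ t : Fˣ, ((t ^ (2:ℤ) : Fˣ) : F) = (t:F)^2 := by
    intro t
    rw [show (2:ℤ) = ((2:ℕ):ℤ) from rfl, zpow_natCast]
    push_cast
    ring
  have e00 : ∀ p : Fˣ × Fˣ, evalMonomial ((0,0) : ℤ × ℤ) p = (1:F) := by
    intro p; simp [evalMonomial]
  have e10 : ∀ p : Fˣ × Fˣ, evalMonomial ((1,0) : ℤ × ℤ) p = (p.1:F) := by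
    intro p; simp [evalMonomial]
  have e20 : ∀ p : Fˣ × Fˣ, evalMonomial ((2,0) : ℤ × ℤ) p = (p.1:F)^2 := by
    intro p; simp [evalMonomial, hz2]
  have e01 : ∀ p : Fˣ × Fˣ, evalMonomial ((0,1) : ℤ × ℤ) p = (p.2:F) := by
    intro p; simp [evalMonomial]
  have e11 : ∀ p : Fˣ × Fˣ, evalMonomial ((1,1) : ℤ × ℤ) p = (p.1:F) * (p.2:F) := by
    intro p; simp [evalMonomial]
  have e02 : ∀ p : Fˣ × Fˣ, evalMonomial ((0,2) : ℤ × ℤ) p = (p.2:F)^2 := by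
    intro p; simp [evalMonomial, hz2]
  -- every codeword is a polynomial of degree ≤ 2
  have hrep : ∀ c ∈ toricCode F (latticePts (P6 13)), ∃ a b c2 d e f : F,
      ∀ p : Fˣ × Fˣ, c p = a + b * (p.1:F) + c2 * (p.1:F)^2
        + (d + e * (p.1:F)) * (p.2:F) + f * (p.2:F)^2 := by
    intro c hc
    rw [latticePts_P6_13] at hc
    unfold toricCode at hc
    simp only [Set.image_insert_eq, Set.image_singleton] at hc
    rw [Submodule.mem_span_insert] at hc
    obtain ⟨a1, z1, hc, rfl⟩ := hc
    rw [Submodule.mem_span_insert] at hc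
    obtain ⟨a2, z2, hc, rfl⟩ := hc
    rw [Submodule.mem_span_insert] at hc
    obtain ⟨a3, z3, hc, rfl⟩ := hc
    rw [Submodule.mem_span_insert] at hc
    obtain ⟨a4, z4, hc, rfl⟩ := hc
    rw [Submodule.mem_span_insert] at hc
    obtain ⟨a5, z5, hc, rfl⟩ := hc
    rw [Submodule.mem_span_singleton] at hc
    obtain ⟨a6, rfl⟩ := hc
    refine ⟨a1, a2, a3, a4, a5, a6, fun p => ?_⟩
    simp only [Pi.add_apply, Pi.smul_apply, smul_eq_mul, e00, e10, e20, e01, e11, e02]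
    ring
  -- weight + number of zeros = length
  have hwt : ∀ c : (Fˣ × Fˣ) → F,
      hammingWt c + (Finset.univ.filter (fun p : Fˣ × Fˣ => c p = 0)).card = N := by
    intro c
    have h1 : hammingWt c = (Finset.univ.filter (fun p : Fˣ × Fˣ => c p ≠ 0)).card := by
      simp only [hammingWt]
      rw [Set.ncard_eq_toFinset_card', Set.toFinset_setOf]
    have h2 := Finset.card_filter_add_card_filter_not
      (s := (Finset.univ : Finset (Fˣ × Fˣ))) (fun p : Fˣ × Fˣ => c p = 0)
    rw [Finset.card_univ, Fintype.card_prod, hcardU, ← hN] at h2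
    simp only [ne_eq] at h1 h2 ⊢
    omega
  -- lower bound for the weight of a nonzero codeword
  have hlb : ∀ c ∈ toricCode F (latticePts (P6 13)), c ≠ 0 →
      N - 2*(q-1) ≤ hammingWt c := by
    intro c hc hc0
    obtain ⟨a, b, c2, d, e, f, hrepc⟩ := hrep c hc
    have hne : ∃ p : Fˣ × Fˣ, a + b * (p.1:F) + c2 * (p.1:F)^2
        + (d + e * (p.1:F)) * (p.2:F) + f * (p.2:F)^2 ≠ 0 := by
      by_contra h
      push_neg at h
      apply hc0
      funext p
      rw [Pi.zero_apply, hrepc p]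
      exact h p
    have hz := zeros_card_le a b c2 d e f hne
    rw [hF] at hz
    have hzeros : (Finset.univ.filter (fun p : Fˣ × Fˣ => c p = 0))
        = (Finset.univ.filter (fun p : Fˣ × Fˣ => a + b * (p.1:F) + c2 * (p.1:F)^2
          + (d + e * (p.1:F)) * (p.2:F) + f * (p.2:F)^2 = 0)) :=
      Finset.filter_congr (fun p _ => by rw [hrepc p])
    have h4 := hwt c
    rw [hzeros] at h4
    omega
  -- the witness codeword (x − α)(x − β)
  have hnontriv : Nontrivial Fˣ := by
    apply Fintype.one_lt_card_iff_nontrivial.mp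
    rw [hcardU]; omega
  obtain ⟨α, β, hαβ⟩ := hnontriv.exists_pair_ne
  set c₀ : (Fˣ × Fˣ) → F := fun p => ((p.1:F) - α) * ((p.1:F) - β) with hc₀
  have hmem : c₀ ∈ toricCode F (latticePts (P6 13)) := by
    have hm : ∀ m : ℤ × ℤ, m ∈ latticePts (P6 13) →
        (evalMonomial m : (Fˣ × Fˣ) → F) ∈ toricCode F (latticePts (P6 13)) := by
      intro m hm
      exact Submodule.subset_span (Set.mem_image_of_mem _ hm)
    have hm00 := hm ((0,0) : ℤ × ℤ) (by rw [latticePts_P6_13]; simp)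
    have hm10 := hm ((1,0) : ℤ × ℤ) (by rw [latticePts_P6_13]; simp)
    have hm20 := hm ((2,0) : ℤ × ℤ) (by rw [latticePts_P6_13]; simp)
    have hcomb : c₀ = ((α:F)*(β:F)) • (evalMonomial ((0,0) : ℤ × ℤ) : (Fˣ × Fˣ) → F)
        + ((-((α:F)+(β:F))) • (evalMonomial ((1,0) : ℤ × ℤ) : (Fˣ × Fˣ) → F)
          + (1:F) • (evalMonomial ((2,0) : ℤ × ℤ) : (Fˣ × Fˣ) → F)) := by
      funext p
      simp only [hc₀, Pi.add_apply, Pi.smul_apply, smul_eq_mul, e00, e10, e20]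
      ring
    rw [hcomb]
    exact Submodule.add_mem _ (Submodule.smul_mem _ _ hm00)
      (Submodule.add_mem _ (Submodule.smul_mem _ _ hm10) (Submodule.smul_mem _ _ hm20))
  have hu : ∃ u : Fˣ, u ≠ α ∧ u ≠ β := by
    have hcard2 : ({α, β} : Finset Fˣ).card ≤ 2 := by
      apply (Finset.card_insert_le _ _).trans
      simp
    have hne2 : (Finset.univ \ ({α, β} : Finset Fˣ)).Nonempty := by
      apply Finset.card_pos.mp
      rw [Finset.card_sdiff_of_subset (Finset.subset_univ _), Finset.card_univ, hcardU]
      omega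
    obtain ⟨u, hu⟩ := hne2
    simp only [Finset.mem_sdiff, Finset.mem_insert, Finset.mem_singleton] at hu
    exact ⟨u, fun h => hu.2 (Or.inl h), fun h => hu.2 (Or.inr h)⟩
  obtain ⟨u, huα, huβ⟩ := hu
  have hc0ne : c₀ ≠ 0 := by
    intro h
    have hval := congrFun h (u, (1 : Fˣ))
    simp only [hc₀, Pi.zero_apply] at hval
    have h1 : (u:F) - α ≠ 0 := sub_ne_zero.mpr (fun h => huα (Units.ext h))
    have h2 : (u:F) - β ≠ 0 := sub_ne_zero.mpr (fun h => huβ (Units.ext h))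
    exact (mul_ne_zero h1 h2) hval
  have hzset : (Finset.univ.filter (fun p : Fˣ × Fˣ => c₀ p = 0))
      = ({α, β} : Finset Fˣ) ×ˢ (Finset.univ : Finset Fˣ) := by
    ext p
    simp only [Finset.mem_filter, Finset.mem_univ, true_and, Finset.mem_product,
      Finset.mem_insert, Finset.mem_singleton, hc₀, and_true]
    constructor
    · intro h
      rcases mul_eq_zero.mp h with h | h
      · exact Or.inl (Units.ext (sub_eq_zero.mp h))
      · exact Or.inr (Units.ext (sub_eq_zero.mp h))
    · intro h
      rcases h with h | h <;> rw [h] <;> simp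
  have hzcard : (Finset.univ.filter (fun p : Fˣ × Fˣ => c₀ p = 0)).card = 2 * (q-1) := by
    rw [hzset, Finset.card_product, Finset.card_univ, hcardU]
    congr 1
    rw [Finset.card_insert_of_notMem (by simpa using hαβ), Finset.card_singleton]
  have hwt0 : hammingWt c₀ = N - 2*(q-1) := by
    have := hwt c₀
    rw [hzcard] at this
    omega
  have hmemW : (N - 2*(q-1)) ∈
      {w | ∃ c ∈ toricCode F (latticePts (P6 13)), c ≠ 0 ∧ hammingWt c = w} :=
    ⟨c₀, hmem, hc0ne, hwt0⟩
  have hfin : minDist (toricCode F (latticePts (P6 13))) = N - 2*(q-1) := by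
    simp only [minDist]
    apply le_antisymm
    · exact Nat.sInf_le hmemW
    · apply le_csInf ⟨_, hmemW⟩
      rintro w ⟨c, hc, hc0, rfl⟩
      exact hlb c hc hc0
  rw [hfin]
  have h2q : 2*(q-1) ≤ N := by
    rw [hN]
    exact Nat.mul_le_mul_right (q-1) (by omega)
  rw [Nat.cast_sub h2q, hN]
  push_cast [Nat.cast_sub (show 1 ≤ q by omega)]
  ring
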